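/- Let c₁, c₂ > 0 and define Φ̃ : 𝕋² → ℂ by Φ̃(w₁, w₂) = c₁(1 − w₁) + c₂(1 − w₂). Then there exist constants C > 0 and σ₀ > 0 such that for every 0 < σ < σ₀ and every t ∈ ℝ, (m × m)({(w₁, w₂) ∈ 𝕋² : σ/2 ≤ Re Φ̃(w₁,w₂) ≤ 2σ and |Im Φ̃(w₁,w₂) − t| ≤ σ}) ≤ C · σ^{3/2}, where m is normalized Haar measure on the unit circle 𝕋. -/

import Mathlib

open MeasureTheory

/-- real/imaginary parts of `c * (1 - exp(Iθ))` -/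
lemma stmt17_reim (c θ : ℝ) :
    ((c:ℂ) * (1 - Complex.exp (Complex.I * θ))).re = c * (1 - Real.cos θ) ∧
    ((c:ℂ) * (1 - Complex.exp (Complex.I * θ))).im = -(c * Real.sin θ) := by
  rw [mul_comm Complex.I]
  constructor <;>
    simp [Complex.mul_re, Complex.mul_im, Complex.sub_re, Complex.sub_im,
      Complex.exp_ofReal_mul_I_re, Complex.exp_ofReal_mul_I_im] <;> ring

/-- `sin x ≥ x/2` for `0 ≤ x ≤ 1`. -/
lemma stmt17_half_le_sin {x : ℝ} (h0 : 0 ≤ x) (h1 : x ≤ 1) : x / 2 ≤ Real.sin x := by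
  rcases eq_or_lt_of_le h0 with h | h
  · simp [← h]
  · have h2 := Real.sin_gt_sub_cube h
    have h3 : x ^ 3 ≤ x ^ 1 := pow_le_pow_of_le_one h0 h1 (by norm_num)
    rw [pow_one] at h3
    linarith

/-- Lipschitz-type bound for arcsin on `[0, √3/2]`. -/
lemma stmt17_arcsin_lip {a b : ℝ} (ha : 0 ≤ a) (hab : a ≤ b) (hb : b ≤ Real.sqrt 3 / 2) :
    Real.arcsin b - Real.arcsin a ≤ 4 * (b - a) := by
  have h3 : Real.sqrt 3 ≤ 2 := by
    nlinarith [Real.sq_sqrt (by norm_num : (3:ℝ) ≥ 0), Real.sqrt_nonneg 3]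
  have hb1 : b ≤ 1 := by linarith
  have ha1 : -1 ≤ a := by linarith
  set u := Real.arcsin a with hu
  set v := Real.arcsin b with hv
  have hu0 : 0 ≤ u := Real.arcsin_nonneg.2 ha
  have huv : u ≤ v := Real.monotone_arcsin hab
  have hpi : 0 < Real.pi := Real.pi_pos
  have hpi4 : Real.pi ≤ 4 := by linarith [Real.pi_lt_d2]
  have hvle : v ≤ Real.pi / 3 := by
    have h1 : v ≤ Real.arcsin (Real.sin (Real.pi / 3)) := by
      rw [Real.sin_pi_div_three]; exact Real.monotone_arcsin hb
    rwa [Real.arcsin_sin (by linarith) (by linarith)] at h1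
  have hsa : Real.sin u = a := Real.sin_arcsin ha1 (by linarith)
  have hsb : Real.sin v = b := Real.sin_arcsin (by linarith) hb1
  rcases eq_or_lt_of_le huv with heq | hlt
  · have hveq : v = u := heq.symm
    rw [hveq]; nlinarith
  · have hdiff : b - a = 2 * Real.sin ((v - u) / 2) * Real.cos ((v + u) / 2) := by
      rw [← hsa, ← hsb, Real.sin_sub_sin]
    have hx0 : 0 < (v - u) / 2 := by linarith
    have hx1 : (v - u) / 2 ≤ 1 := by nlinarith
    have hs : (v - u) / 2 / 2 ≤ Real.sin ((v - u) / 2) :=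
      stmt17_half_le_sin (le_of_lt hx0) hx1
    have hc : (1:ℝ) / 2 ≤ Real.cos ((v + u) / 2) := by
      have := Real.cos_le_cos_of_nonneg_of_le_pi (by linarith : (0:ℝ) ≤ (v + u) / 2)
        (by linarith : Real.pi / 3 ≤ Real.pi) (by nlinarith : (v + u) / 2 ≤ Real.pi / 3)
      rwa [Real.cos_pi_div_three] at this
    nlinarith [Real.sin_nonneg_of_nonneg_of_le_pi (le_of_lt hx0) (by nlinarith : (v - u) / 2 ≤ Real.pi)]

/-- If `cos y ≥ 1/2` and `y ∈ [0, 2π)` then `y ≤ π/3` or `y ≥ 5π/3`. -/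
lemma stmt17_dich {y : ℝ} (h0 : 0 ≤ y) (h2 : y < 2 * Real.pi) (hc : 1 / 2 ≤ Real.cos y) :
    y ≤ Real.pi / 3 ∨ 5 * Real.pi / 3 ≤ y := by
  have hpi : 0 < Real.pi := Real.pi_pos
  by_contra h
  push_neg at h
  obtain ⟨hy1, hy2⟩ := h
  rcases le_or_gt y Real.pi with hyp | hyp
  · have := Real.cos_lt_cos_of_nonneg_of_le_pi (by linarith : (0:ℝ) ≤ Real.pi / 3) hyp hy1
    rw [Real.cos_pi_div_three] at this; linarith
  · have hcz : Real.cos (2 * Real.pi - y) = Real.cos y := by simp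
    have := Real.cos_lt_cos_of_nonneg_of_le_pi (by linarith : (0:ℝ) ≤ Real.pi / 3)
      (by linarith : 2 * Real.pi - y ≤ Real.pi) (by linarith : Real.pi / 3 < 2 * Real.pi - y)
    rw [Real.cos_pi_div_three, hcz] at this; linarith

/-- arcsin interval length bound. -/
lemma stmt17_D {c σ : ℝ} (hc : 0 < c) (hσ : 0 < σ) (r : ℝ) :
    Real.arcsin (min ((r + σ) / c) (Real.sqrt 3 / 2)) -
      Real.arcsin (max ((r - σ) / c) 0) ≤ 8 * σ / c := by
  set a := max ((r - σ) / c) 0 with hadef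
  set b := min ((r + σ) / c) (Real.sqrt 3 / 2) with hbdef
  rcases le_or_gt a b with hab | hab
  · have h1 : Real.arcsin b - Real.arcsin a ≤ 4 * (b - a) :=
      stmt17_arcsin_lip (le_max_right _ _) hab (min_le_right _ _)
    have h2 : b - a ≤ 2 * σ / c := by
      have hbu : b ≤ (r + σ) / c := min_le_left _ _
      have hal : (r - σ) / c ≤ a := le_max_left _ _
      have : (r + σ) / c - (r - σ) / c = 2 * σ / c := by field_simp; ring
      linarith
    have : 4 * (2 * σ / c) = 8 * σ / c := by ring
    linarith
  · have := Real.monotone_arcsin (le_of_lt hab)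
    have : Real.arcsin b - Real.arcsin a ≤ 0 := by linarith
    have hpos : 0 < 8 * σ / c := by positivity
    linarith

/-- Slice measure bound. -/
lemma stmt17_slice {c σ : ℝ} (hc : 0 < c) (hσ : 0 < σ) (r : ℝ) :
    volume {y : ℝ | y ∈ Set.Ico 0 (2 * Real.pi) ∧ 1 / 2 ≤ Real.cos y ∧
      |c * Real.sin y - r| ≤ σ} ≤ ENNReal.ofReal (16 * σ / c) := by
  have hpi : 0 < Real.pi := Real.pi_pos
  have hpi4 : Real.pi ≤ 4 := by linarith [Real.pi_lt_d2]
  set a₁ := max ((r - σ) / c) 0 with ha₁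
  set b₁ := min ((r + σ) / c) (Real.sqrt 3 / 2) with hb₁
  set a₂ := max ((-r - σ) / c) 0 with ha₂
  set b₂ := min ((-r + σ) / c) (Real.sqrt 3 / 2) with hb₂
  have hsub : {y : ℝ | y ∈ Set.Ico 0 (2 * Real.pi) ∧ 1 / 2 ≤ Real.cos y ∧
      |c * Real.sin y - r| ≤ σ} ⊆
      Set.Icc (Real.arcsin a₁) (Real.arcsin b₁) ∪
      Set.Icc (2 * Real.pi - Real.arcsin b₂) (2 * Real.pi - Real.arcsin a₂) := by
    rintro y ⟨⟨hy0, hy2⟩, hyc, hyabs⟩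
    rcases stmt17_dich hy0 hy2 hyc with hcase | hcase
    · left
      have habs := abs_le.1 hyabs
      have hsge : (r - σ) / c ≤ Real.sin y := by
        rw [div_le_iff₀ hc]; nlinarith [habs.1]
      have hsle : Real.sin y ≤ (r + σ) / c := by
        rw [le_div_iff₀ hc]; nlinarith [habs.2]
      have hs0 : 0 ≤ Real.sin y := Real.sin_nonneg_of_nonneg_of_le_pi hy0 (by linarith)
      have hsle3 : Real.sin y ≤ Real.sqrt 3 / 2 := by
        rw [← Real.sin_pi_div_three]
        exact Real.strictMonoOn_sin.monotoneOn ⟨by linarith, by linarith⟩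
          ⟨by linarith, by linarith⟩ hcase
      have harys : Real.arcsin (Real.sin y) = y := Real.arcsin_sin (by linarith) (by linarith)
      constructor
      · rw [← harys]; exact Real.monotone_arcsin (max_le hsge hs0)
      · rw [← harys]; exact Real.monotone_arcsin (le_min hsle hsle3)
    · right
      set z := 2 * Real.pi - y with hz
      have hz0 : 0 ≤ z := by rw [hz]; linarith
      have hz3 : z ≤ Real.pi / 3 := by rw [hz]; linarith
      have hsy : Real.sin y = -Real.sin z := by
        rw [show y = 2 * Real.pi - z by rw [hz]; ring]; simp
      have hyabs' : |c * Real.sin z - (-r)| ≤ σ := by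
        rw [show c * Real.sin z - (-r) = -(c * Real.sin y - r) by rw [hsy]; ring, abs_neg]
        exact hyabs
      have habs := abs_le.1 hyabs'
      have hsge : (-r - σ) / c ≤ Real.sin z := by
        rw [div_le_iff₀ hc]; nlinarith [habs.1]
      have hsle : Real.sin z ≤ (-r + σ) / c := by
        rw [le_div_iff₀ hc]; nlinarith [habs.2]
      have hs0 : 0 ≤ Real.sin z := Real.sin_nonneg_of_nonneg_of_le_pi hz0 (by linarith)
      have hsle3 : Real.sin z ≤ Real.sqrt 3 / 2 := by
        rw [← Real.sin_pi_div_three]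
        exact Real.strictMonoOn_sin.monotoneOn ⟨by linarith, by linarith⟩
          ⟨by linarith, by linarith⟩ hz3
      have harys : Real.arcsin (Real.sin z) = z := Real.arcsin_sin (by linarith) (by linarith)
      have h1 : Real.arcsin a₂ ≤ z := by
        rw [← harys]; exact Real.monotone_arcsin (max_le hsge hs0)
      have h2 : z ≤ Real.arcsin b₂ := by
        rw [← harys]; exact Real.monotone_arcsin (le_min hsle hsle3)
      exact ⟨by rw [hz] at h2; linarith, by rw [hz] at h1; linarith⟩
  calc volume {y : ℝ | y ∈ Set.Ico 0 (2 * Real.pi) ∧ 1 / 2 ≤ Real.cos y ∧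
        |c * Real.sin y - r| ≤ σ}
      ≤ volume (Set.Icc (Real.arcsin a₁) (Real.arcsin b₁) ∪
          Set.Icc (2 * Real.pi - Real.arcsin b₂) (2 * Real.pi - Real.arcsin a₂)) :=
        measure_mono hsub
    _ ≤ volume (Set.Icc (Real.arcsin a₁) (Real.arcsin b₁)) +
          volume (Set.Icc (2 * Real.pi - Real.arcsin b₂) (2 * Real.pi - Real.arcsin a₂)) :=
        measure_union_le _ _
    _ ≤ ENNReal.ofReal (8 * σ / c) + ENNReal.ofReal (8 * σ / c) := by
        gcongr
        · rw [Real.volume_Icc]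
          exact ENNReal.ofReal_le_ofReal (stmt17_D hc hσ r)
        · rw [Real.volume_Icc]
          apply ENNReal.ofReal_le_ofReal
          have := stmt17_D hc hσ (-r)
          rw [← ha₂, ← hb₂] at this
          linarith
    _ = ENNReal.ofReal (16 * σ / c) := by
        rw [← ENNReal.ofReal_add (by positivity) (by positivity)]
        congr 1; ring

/-- Bound on the `x` set. -/
lemma stmt17_A {c σ : ℝ} (hc : 0 < c) (hσ : 0 < σ) :
    volume {x : ℝ | x ∈ Set.Ico 0 (2 * Real.pi) ∧ 1 / 2 ≤ Real.cos x ∧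
      c * (1 - Real.cos x) ≤ 2 * σ} ≤ ENNReal.ofReal (8 * Real.sqrt (σ / c)) := by
  have hpi : 0 < Real.pi := Real.pi_pos
  have hpi4 : Real.pi ≤ 4 := by linarith [Real.pi_lt_d2]
  set δ := 4 * Real.sqrt (σ / c) with hδ
  have hδ0 : 0 ≤ δ := by positivity
  have key : ∀ x : ℝ, 0 ≤ x → x ≤ Real.pi / 3 → c * (1 - Real.cos x) ≤ 2 * σ → x ≤ δ := by
    intro x hx0 hx3 hxc
    have hcosb : 1 - Real.cos x ≥ x ^ 2 / 8 := by
      rcases eq_or_lt_of_le hx0 with h | h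
      · rw [← h]; simp
      · have hu1 : x / 2 ≤ 1 := by linarith
        have hs : x / 2 / 2 ≤ Real.sin (x / 2) := stmt17_half_le_sin (by linarith) hu1
        have hid : 1 - Real.cos x = 2 * Real.sin (x / 2) ^ 2 := by
          have h1 := Real.cos_two_mul' (x / 2)
          rw [show 2 * (x / 2) = x by ring] at h1
          have h2 := Real.sin_sq_add_cos_sq (x / 2)
          nlinarith
        nlinarith
    have hx2 : x ^ 2 ≤ 16 * (σ / c) := by
      rw [div_eq_mul_inv]
      have : c * (x ^ 2 / 8) ≤ 2 * σ := by nlinarith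
      have h16 : x ^ 2 ≤ 16 * σ / c := by
        rw [le_div_iff₀ hc]; nlinarith
      rw [show 16 * (σ * c⁻¹) = 16 * σ / c by field_simp]
      exact h16
    have := Real.sqrt_le_sqrt hx2
    rw [Real.sqrt_sq hx0] at this
    have h16 : Real.sqrt (16 * (σ / c)) = 4 * Real.sqrt (σ / c) := by
      rw [Real.sqrt_mul (by norm_num) (σ / c), show (16:ℝ) = 4 ^ 2 by norm_num,
        Real.sqrt_sq (by norm_num)]
    rw [h16] at this
    exact this
  have hsub : {x : ℝ | x ∈ Set.Ico 0 (2 * Real.pi) ∧ 1 / 2 ≤ Real.cos x ∧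
      c * (1 - Real.cos x) ≤ 2 * σ} ⊆
      Set.Icc 0 δ ∪ Set.Icc (2 * Real.pi - δ) (2 * Real.pi) := by
    rintro x ⟨⟨hx0, hx2⟩, hxc, hxb⟩
    rcases stmt17_dich hx0 hx2 hxc with hcase | hcase
    · exact Or.inl ⟨hx0, key x hx0 hcase hxb⟩
    · right
      set z := 2 * Real.pi - x with hz
      have hcz : Real.cos z = Real.cos x := by rw [hz]; simp
      have hzb : c * (1 - Real.cos z) ≤ 2 * σ := by rw [hcz]; exact hxb
      have := key z (by rw [hz]; linarith) (by rw [hz]; linarith) hzb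
      rw [hz] at this
      exact ⟨by linarith, by linarith⟩
  calc volume {x : ℝ | x ∈ Set.Ico 0 (2 * Real.pi) ∧ 1 / 2 ≤ Real.cos x ∧
        c * (1 - Real.cos x) ≤ 2 * σ}
      ≤ volume (Set.Icc 0 δ ∪ Set.Icc (2 * Real.pi - δ) (2 * Real.pi)) := measure_mono hsub
    _ ≤ volume (Set.Icc 0 δ) + volume (Set.Icc (2 * Real.pi - δ) (2 * Real.pi)) :=
        measure_union_le _ _
    _ = ENNReal.ofReal δ + ENNReal.ofReal δ := by
        rw [Real.volume_Icc, Real.volume_Icc]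
        congr 2 <;> ring
    _ = ENNReal.ofReal (8 * Real.sqrt (σ / c)) := by
        rw [← ENNReal.ofReal_add hδ0 hδ0]
        congr 1; rw [hδ]; ring

set_option maxHeartbeats 1000000 in
theorem stmt17 (c₁ c₂ : ℝ) (hc₁ : 0 < c₁) (hc₂ : 0 < c₂) :
    ∃ C σ₀ : ℝ, 0 < C ∧ 0 < σ₀ ∧ ∀ σ : ℝ, 0 < σ → σ < σ₀ → ∀ t : ℝ,
      volume {θ : ℝ × ℝ | θ.1 ∈ Set.Ico 0 (2 * Real.pi) ∧ θ.2 ∈ Set.Ico 0 (2 * Real.pi) ∧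
          σ / 2 ≤ ((c₁ : ℂ) * (1 - Complex.exp (Complex.I * (θ.1 : ℂ))) +
            (c₂ : ℂ) * (1 - Complex.exp (Complex.I * (θ.2 : ℂ)))).re ∧
          ((c₁ : ℂ) * (1 - Complex.exp (Complex.I * (θ.1 : ℂ))) +
            (c₂ : ℂ) * (1 - Complex.exp (Complex.I * (θ.2 : ℂ)))).re ≤ 2 * σ ∧
          |((c₁ : ℂ) * (1 - Complex.exp (Complex.I * (θ.1 : ℂ))) +
            (c₂ : ℂ) * (1 - Complex.exp (Complex.I * (θ.2 : ℂ)))).im - t| ≤ σ} ≤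
        ENNReal.ofReal (C * σ ^ ((3 : ℝ) / 2)) := by
  have hs1 : 0 < Real.sqrt c₁ := Real.sqrt_pos.2 hc₁
  refine ⟨128 / (Real.sqrt c₁ * c₂), min c₁ c₂ / 4, by positivity, by positivity, ?_⟩
  intro σ hσ0 hσ1 t
  set A := {x : ℝ | x ∈ Set.Ico 0 (2 * Real.pi) ∧ 1 / 2 ≤ Real.cos x ∧
    c₁ * (1 - Real.cos x) ≤ 2 * σ} with hAdef
  set T := {θ : ℝ × ℝ | θ.1 ∈ A ∧ (θ.2 ∈ Set.Ico 0 (2 * Real.pi) ∧ 1 / 2 ≤ Real.cos θ.2 ∧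
    |c₂ * Real.sin θ.2 - (-(c₁ * Real.sin θ.1 + t))| ≤ σ)} with hTdef
  have hAmeas : MeasurableSet A := by
    have : A = Set.Ico 0 (2 * Real.pi) ∩ Real.cos ⁻¹' Set.Ici (1 / 2) ∩
        (fun x => c₁ * (1 - Real.cos x)) ⁻¹' Set.Iic (2 * σ) := by
      ext x
      simp only [hAdef, Set.mem_setOf_eq, Set.mem_inter_iff, Set.mem_preimage,
        Set.mem_Ici, Set.mem_Iic]
      tauto
    rw [this]
    exact ((measurableSet_Ico.inter
      (Real.continuous_cos.measurable measurableSet_Ici)).inter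
      ((by fun_prop : Measurable fun x : ℝ => c₁ * (1 - Real.cos x)) measurableSet_Iic))
  have hTmeas : MeasurableSet T := by
    have : T = (Prod.fst ⁻¹' A) ∩ (Prod.snd ⁻¹' Set.Ico 0 (2 * Real.pi)) ∩
        ((fun θ : ℝ × ℝ => Real.cos θ.2) ⁻¹' Set.Ici (1 / 2)) ∩
        ((fun θ : ℝ × ℝ => |c₂ * Real.sin θ.2 - (-(c₁ * Real.sin θ.1 + t))|) ⁻¹'
          Set.Iic σ) := by
      ext θ
      simp only [hTdef, Set.mem_setOf_eq, Set.mem_inter_iff, Set.mem_preimage,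
        Set.mem_Ici, Set.mem_Iic]
      tauto
    rw [this]
    refine (((measurable_fst hAmeas).inter
      (measurable_snd measurableSet_Ico)).inter
      (((Real.continuous_cos.comp continuous_snd).measurable) measurableSet_Ici)).inter
      (((by fun_prop : Measurable fun θ : ℝ × ℝ =>
        |c₂ * Real.sin θ.2 - (-(c₁ * Real.sin θ.1 + t))|)) measurableSet_Iic)
  have hσc₁ : 2 * σ < c₁ / 2 := by
    have : σ < c₁ / 4 := lt_of_lt_of_le hσ1 (by
      have := min_le_left c₁ c₂; linarith)
    linarith
  have hσc₂ : 2 * σ < c₂ / 2 := by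
    have : σ < c₂ / 4 := lt_of_lt_of_le hσ1 (by
      have := min_le_right c₁ c₂; linarith)
    linarith
  have hST : {θ : ℝ × ℝ | θ.1 ∈ Set.Ico 0 (2 * Real.pi) ∧ θ.2 ∈ Set.Ico 0 (2 * Real.pi) ∧
      σ / 2 ≤ ((c₁ : ℂ) * (1 - Complex.exp (Complex.I * (θ.1 : ℂ))) +
        (c₂ : ℂ) * (1 - Complex.exp (Complex.I * (θ.2 : ℂ)))).re ∧
      ((c₁ : ℂ) * (1 - Complex.exp (Complex.I * (θ.1 : ℂ))) +
        (c₂ : ℂ) * (1 - Complex.exp (Complex.I * (θ.2 : ℂ)))).re ≤ 2 * σ ∧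
      |((c₁ : ℂ) * (1 - Complex.exp (Complex.I * (θ.1 : ℂ))) +
        (c₂ : ℂ) * (1 - Complex.exp (Complex.I * (θ.2 : ℂ)))).im - t| ≤ σ} ⊆ T := by
    rintro ⟨x, y⟩ ⟨hx, hy, _, hre, him⟩
    obtain ⟨hre1, him1⟩ := stmt17_reim c₁ x
    obtain ⟨hre2, him2⟩ := stmt17_reim c₂ y
    rw [Complex.add_re, hre1, hre2] at hre
    rw [Complex.add_im, him1, him2] at him
    have hcx1 : Real.cos x ≤ 1 := Real.cos_le_one x
    have hcy1 : Real.cos y ≤ 1 := Real.cos_le_one y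
    have ht1 : 0 ≤ c₁ * (1 - Real.cos x) := by nlinarith
    have ht2 : 0 ≤ c₂ * (1 - Real.cos y) := by nlinarith
    have hb1 : c₁ * (1 - Real.cos x) ≤ 2 * σ := by linarith
    have hb2 : c₂ * (1 - Real.cos y) ≤ 2 * σ := by linarith
    have hcosx : 1 / 2 ≤ Real.cos x := by nlinarith
    have hcosy : 1 / 2 ≤ Real.cos y := by nlinarith
    refine ⟨⟨hx, hcosx, hb1⟩, hy, hcosy, ?_⟩
    rw [show c₂ * Real.sin y - (-(c₁ * Real.sin x + t)) =
      -((-(c₁ * Real.sin x) + -(c₂ * Real.sin y)) - t) by ring, abs_neg]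
    exact him
  refine le_trans (measure_mono hST) ?_
  have hTvol : volume T = ∫⁻ x, volume (Prod.mk x ⁻¹' T) := by
    rw [MeasureTheory.Measure.volume_eq_prod, MeasureTheory.Measure.prod_apply hTmeas]
  rw [hTvol]
  have hslicebd : ∀ x : ℝ, volume (Prod.mk x ⁻¹' T) ≤
      A.indicator (fun _ => ENNReal.ofReal (16 * σ / c₂)) x := by
    intro x
    by_cases hx : x ∈ A
    · rw [Set.indicator_of_mem hx]
      refine le_trans (measure_mono ?_) (stmt17_slice hc₂ hσ0 (-(c₁ * Real.sin x + t)))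
      intro y hy
      exact hy.2
    · rw [Set.indicator_of_notMem hx]
      have : Prod.mk x ⁻¹' T = ∅ := Set.eq_empty_iff_forall_notMem.2 fun y hy => hx hy.1
      rw [this, measure_empty]
  refine le_trans (MeasureTheory.lintegral_mono hslicebd) ?_
  rw [MeasureTheory.lintegral_indicator hAmeas, MeasureTheory.setLIntegral_const]
  have hAbd := stmt17_A hc₁ hσ0
  calc ENNReal.ofReal (16 * σ / c₂) * volume A
      ≤ ENNReal.ofReal (16 * σ / c₂) * ENNReal.ofReal (8 * Real.sqrt (σ / c₁)) := by
        gcongr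
    _ = ENNReal.ofReal (16 * σ / c₂ * (8 * Real.sqrt (σ / c₁))) := by
        rw [← ENNReal.ofReal_mul (by positivity)]
    _ ≤ ENNReal.ofReal (128 / (Real.sqrt c₁ * c₂) * σ ^ ((3 : ℝ) / 2)) := by
        apply ENNReal.ofReal_le_ofReal
        have hrpow : σ ^ ((3 : ℝ) / 2) = σ * Real.sqrt σ := by
          rw [show (3 : ℝ) / 2 = 1 + 1 / 2 by norm_num, Real.rpow_add hσ0,
            Real.rpow_one, Real.sqrt_eq_rpow]
        have hsqdiv : Real.sqrt (σ / c₁) = Real.sqrt σ / Real.sqrt c₁ :=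
          Real.sqrt_div (le_of_lt hσ0) c₁
        rw [hrpow, hsqdiv]
        apply le_of_eq
        have h0 : Real.sqrt c₁ ≠ 0 := ne_of_gt hs1
        have h1 : c₂ ≠ 0 := ne_of_gt hc₂
        field_simp
        ring
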